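/- Let n ≥ 2 and 1 ≤ k ≤ n−1, let w be a (k,n−k)-shuffle, and let σ be the permutation of {1,…,n} with σ(i) ≡ i − k (mod n). Then for all 1 ≤ i < j ≤ n with w^{-1}(i) > w^{-1}(j), one has σ(w^{-1}(i)) < σ(w^{-1}(j)). (This is the key claim v·R(w^{-1}) ⊆ R((w^I)^{-1}) with v = w^I w^{-1} in the proof of Lemma 3.1, which shows that the translates w·C of the shifted big cell cover G/P_I.) -/

import Mathlib

/-- A `(k,n−k)`-shuffle (indices written `0,…,n−1`): a permutation that is strictly
increasing on the block `{0,…,k−1}` and on the block `{k,…,n−1}`. -/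
def IsShuffle (n k : ℕ) (w : Equiv.Perm (Fin n)) : Prop :=
  ∀ i j : Fin n, i < j → ((j : ℕ) < k ∨ k ≤ (i : ℕ)) → w i < w j

/-- The key claim `v·R(w^{-1}) ⊆ R((w^I)^{-1})` with `v = w^I w^{-1}` in the proof
of Lemma 3.1, for `W = S_n`, `W_I = S_k × S_{n−k}`, `w^I = σ : i ↦ i − k (mod n)`:
for a shuffle `w` and `i < j` with `w^{-1}(i) > w^{-1}(j)`, one has
`σ(w^{-1}(i)) < σ(w^{-1}(j))`. -/
theorem shuffle_inverse_inversion_straightened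
    (n k : ℕ) (hn : 2 ≤ n) (hk1 : 1 ≤ k) (hk2 : k ≤ n - 1)
    (w : Equiv.Perm (Fin n)) (hw : IsShuffle n k w)
    (σ : Equiv.Perm (Fin n))
    (hσ : ∀ i : Fin n, Int.ModEq (n : ℤ) ((σ i : ℕ) : ℤ) (((i : ℕ) : ℤ) - (k : ℤ))) :
    ∀ i j : Fin n, i < j → w⁻¹ j < w⁻¹ i → σ (w⁻¹ i) < σ (w⁻¹ j) := by
  intro i j hij hinv
  set a := w⁻¹ i with ha
  set b := w⁻¹ j with hb
  have hwa : w a = i := w.apply_symm_apply i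
  have hwb : w b = j := w.apply_symm_apply j
  -- the two preimages must lie in different blocks
  have hak : k ≤ (a : ℕ) := by
    by_contra h
    push_neg at h
    have hcon := hw b a hinv (Or.inl h)
    rw [hwa, hwb] at hcon
    exact absurd hcon (not_lt.mpr hij.le)
  have hbk : (b : ℕ) < k := by
    by_contra h
    push_neg at h
    have hcon := hw b a hinv (Or.inr h)
    rw [hwa, hwb] at hcon
    exact absurd hcon (not_lt.mpr hij.le)
  -- integer computations
  have hn0 : (0 : ℤ) < (n : ℤ) := by exact_mod_cast Nat.lt_of_lt_of_le Nat.zero_lt_two hn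
  have h1 := (hσ a).dvd
  have h2 := (hσ b).dvd
  obtain ⟨c, hc⟩ := h1
  obtain ⟨d, hd⟩ := h2
  have hσa : ((σ a : ℕ) : ℤ) < n := by exact_mod_cast (σ a).isLt
  have hσa0 : (0 : ℤ) ≤ ((σ a : ℕ) : ℤ) := Int.natCast_nonneg _
  have hσb : ((σ b : ℕ) : ℤ) < n := by exact_mod_cast (σ b).isLt
  have hσb0 : (0 : ℤ) ≤ ((σ b : ℕ) : ℤ) := Int.natCast_nonneg _
  have haN : ((a : ℕ) : ℤ) < n := by exact_mod_cast a.isLt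
  have hbN : ((b : ℕ) : ℤ) < n := by exact_mod_cast b.isLt
  have hakZ : (k : ℤ) ≤ ((a : ℕ) : ℤ) := by exact_mod_cast hak
  have hbkZ : ((b : ℕ) : ℤ) < (k : ℤ) := by exact_mod_cast hbk
  have hkZ : (0 : ℤ) < (k : ℤ) := by exact_mod_cast hk1
  -- c must be 0 and d must be -1
  have hc0 : c = 0 := by
    by_contra hcne
    rcases lt_or_gt_of_ne hcne with hlt | hgt
    · have : (n : ℤ) * c ≤ -n := by
        have : c ≤ -1 := by omega
        nlinarith
      omega
    · have : (n : ℤ) ≤ (n : ℤ) * c := by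
        have : 1 ≤ c := hgt
        nlinarith
      omega
  have hd1 : d = -1 := by
    by_contra hdne
    rcases lt_or_gt_of_ne hdne with hlt | hgt
    · have : (n : ℤ) * d ≤ -2 * n := by
        have : d ≤ -2 := by omega
        nlinarith
      omega
    · have : 0 ≤ (n : ℤ) * d := by
        have : 0 ≤ d := by omega
        nlinarith
      omega
  subst hc0 hd1
  have hva : ((σ a : ℕ) : ℤ) = ((a : ℕ) : ℤ) - k := by omega
  have hvb : ((σ b : ℕ) : ℤ) = ((b : ℕ) : ℤ) - k + n := by omega
  have : ((σ a : ℕ) : ℤ) < ((σ b : ℕ) : ℤ) := by omega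
  have hlt : (σ a : ℕ) < (σ b : ℕ) := by exact_mod_cast this
  exact hlt
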